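/- For every a ∈ ℝ³ and all indices i, j, k ∈ {1,2,3}, the function g(v) = φ_i(v) φ_j(v) φ_k(v) √(μ_a(v)) satisfies P_a g(v) = Σ_{ℓ=1}^3 (δ_{ij} δ_{kℓ} + δ_{ik} δ_{jℓ} + δ_{jk} δ_{iℓ}) · φ_ℓ(v) √(μ_a(v)) for all v ∈ ℝ³, where δ is the Kronecker delta. -/

import Mathlib

open MeasureTheory
open scoped ENNReal

/-- `ℝ³` with the Euclidean norm. -/
abbrev E3 : Type := EuclideanSpace ℝ (Fin 3)

/-- The Maxwellian `μ_a(v) = (2π)^{-3/2} exp(-|v-a|²/2)`. -/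
noncomputable def maxw (a v : E3) : ℝ :=
  (2 * Real.pi) ^ (-(3:ℝ)/2) * Real.exp (-‖v - a‖ ^ 2 / 2)

/-- The five collision invariants `φ₀ = 1`, `φ_j = v_j - a_j` (`j = 1,2,3`),
`φ₄ = (|v-a|² - 3)/√6`. -/
noncomputable def phiB (a : E3) : Fin 5 → E3 → ℝ :=
  ![fun _ => 1,
    fun v => v 0 - a 0,
    fun v => v 1 - a 1,
    fun v => v 2 - a 2,
    fun v => (‖v - a‖ ^ 2 - 3) / Real.sqrt 6]

/-- The hydrodynamic projection
`P_a f(v) = Σ_{j=0}^4 (∫ f(w) φ_j(w) √μ_a(w) dw) φ_j(v) √μ_a(v)`. -/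
noncomputable def Pproj (a : E3) (f : E3 → ℝ) (v : E3) : ℝ :=
  ∑ j : Fin 5,
    (∫ w, f w * phiB a j w * Real.sqrt (maxw a w)) * (phiB a j v * Real.sqrt (maxw a v))

/-! ### One-dimensional Gaussian moments -/

open Real Filter

noncomputable def gm (n : ℕ) : ℝ := ∫ x : ℝ, x ^ n * Real.exp (-x^2/2)

lemma gmInt (n : ℕ) : Integrable (fun x : ℝ => x ^ n * Real.exp (-x^2/2)) := by
  have h := integrable_rpow_mul_exp_neg_mul_sq (b := 1/2) (by norm_num) (s := n)
    (lt_of_lt_of_le neg_one_lt_zero (Nat.cast_nonneg n))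
  have e : (fun x : ℝ => x ^ (n:ℝ) * Real.exp (-(1/2) * x^2))
      = fun x : ℝ => x ^ n * Real.exp (-x^2/2) := by
    funext x
    rw [Real.rpow_natCast]
    congr 1
    ring_nf
  rwa [e] at h

lemma gm_odd (n : ℕ) (hn : Odd n) : gm n = 0 := by
  have h1 : ∫ x : ℝ, ((-x) ^ n * Real.exp (-(-x)^2/2)) = gm n := by
    exact integral_neg_eq_self (fun x : ℝ => x ^ n * Real.exp (-x^2/2)) volume
  have h2 : ∀ x : ℝ, (-x) ^ n * Real.exp (-(-x)^2/2) = -(x ^ n * Real.exp (-x^2/2)) := by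
    intro x; rw [hn.neg_pow, neg_sq]; ring
  simp_rw [h2, integral_neg] at h1
  have : -gm n = gm n := h1
  linarith

lemma gm_zero : gm 0 = Real.sqrt (2 * Real.pi) := by
  have e : (fun x : ℝ => x ^ 0 * Real.exp (-x^2/2)) = fun x : ℝ => Real.exp (-(1/2) * x^2) := by
    funext x; rw [pow_zero, one_mul]; congr 1; ring
  rw [gm, e, integral_gaussian]
  rw [show Real.pi / (1/2) = 2 * Real.pi by ring]

lemma deriv_gauss (x : ℝ) :
    HasDerivAt (fun t : ℝ => Real.exp (-t^2/2)) (-x * Real.exp (-x^2/2)) x := by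
  have h1 : HasDerivAt (fun t : ℝ => -t^2/2) (-x) x := by
    have := ((hasDerivAt_pow 2 x).neg).div_const 2
    simpa using this.congr_deriv (by ring)
  simpa [mul_comm] using h1.exp

lemma gm_two : gm 2 = Real.sqrt (2 * Real.pi) := by
  have hderiv : ∀ x : ℝ, HasDerivAt (fun t : ℝ => -t * Real.exp (-t^2/2))
      ((x^2 - 1) * Real.exp (-x^2/2)) x := by
    intro x
    have h := (hasDerivAt_id x).neg.mul (deriv_gauss x)
    exact h.congr_deriv (by simp only [Pi.neg_apply, id_eq]; ring)
  have hint : Integrable (fun x : ℝ => (x^2 - 1) * Real.exp (-x^2/2)) := by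
    have := (gmInt 2).sub (gmInt 0)
    simpa [sub_mul, Pi.sub_def] using this
  have htend : Tendsto (fun x : ℝ => |x| ^ (1:ℝ) * Real.exp (-(1/2) * x^2))
      (Filter.cocompact ℝ) (nhds 0) :=
    tendsto_rpow_abs_mul_exp_neg_mul_sq_cocompact (by norm_num) 1
  have hbound : ∀ x : ℝ, ‖-x * Real.exp (-x^2/2)‖ ≤ |x| ^ (1:ℝ) * Real.exp (-(1/2) * x^2) := by
    intro x
    rw [Real.rpow_one]
    have : -x^2/2 = -(1/2) * x^2 := by ring
    rw [this, norm_mul, norm_neg, Real.norm_eq_abs, Real.norm_eq_abs, Real.abs_exp]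
  have htop : Tendsto (fun x : ℝ => -x * Real.exp (-x^2/2)) atTop (nhds 0) :=
    squeeze_zero_norm hbound (htend.mono_left (by rw [cocompact_eq_atBot_atTop]; exact le_sup_right))
  have hbot : Tendsto (fun x : ℝ => -x * Real.exp (-x^2/2)) atBot (nhds 0) :=
    squeeze_zero_norm hbound (htend.mono_left (by rw [cocompact_eq_atBot_atTop]; exact le_sup_left))
  have key := integral_of_hasDerivAt_of_tendsto hderiv hint hbot htop
  have split : ∫ x : ℝ, (x^2 - 1) * Real.exp (-x^2/2) = gm 2 - gm 0 := by
    rw [gm, gm, ← integral_sub (gmInt 2) (gmInt 0)]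
    congr 1; funext x; ring
  rw [split, gm_zero] at key
  linarith

lemma gm_four : gm 4 = 3 * Real.sqrt (2 * Real.pi) := by
  have hderiv : ∀ x : ℝ, HasDerivAt (fun t : ℝ => -t^3 * Real.exp (-t^2/2))
      ((x^4 - 3*x^2) * Real.exp (-x^2/2)) x := by
    intro x
    have h := ((hasDerivAt_pow 3 x).neg).mul (deriv_gauss x)
    exact h.congr_deriv (by norm_num; ring)
  have hint : Integrable (fun x : ℝ => (x^4 - 3*x^2) * Real.exp (-x^2/2)) := by
    have := (gmInt 4).sub ((gmInt 2).const_mul 3)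
    simpa [sub_mul, mul_assoc, Pi.sub_def] using this
  have htend : Tendsto (fun x : ℝ => |x| ^ (3:ℝ) * Real.exp (-(1/2) * x^2))
      (Filter.cocompact ℝ) (nhds 0) :=
    tendsto_rpow_abs_mul_exp_neg_mul_sq_cocompact (by norm_num) 3
  have hbound : ∀ x : ℝ, ‖-x^3 * Real.exp (-x^2/2)‖ ≤ |x| ^ (3:ℝ) * Real.exp (-(1/2) * x^2) := by
    intro x
    have h3 : |x| ^ (3:ℝ) = |x|^(3:ℕ) := by
      rw [show ((3:ℝ)) = ((3:ℕ):ℝ) by norm_num, Real.rpow_natCast]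
    have : -x^2/2 = -(1/2) * x^2 := by ring
    rw [h3, this, norm_mul, norm_neg, Real.norm_eq_abs, Real.norm_eq_abs, Real.abs_exp, abs_pow]
  have htop : Tendsto (fun x : ℝ => -x^3 * Real.exp (-x^2/2)) atTop (nhds 0) :=
    squeeze_zero_norm hbound (htend.mono_left (by rw [cocompact_eq_atBot_atTop]; exact le_sup_right))
  have hbot : Tendsto (fun x : ℝ => -x^3 * Real.exp (-x^2/2)) atBot (nhds 0) :=
    squeeze_zero_norm hbound (htend.mono_left (by rw [cocompact_eq_atBot_atTop]; exact le_sup_left))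
  have key := integral_of_hasDerivAt_of_tendsto hderiv hint hbot htop
  have split : ∫ x : ℝ, (x^4 - 3*x^2) * Real.exp (-x^2/2) = gm 4 - 3 * gm 2 := by
    rw [gm, gm, ← integral_const_mul, ← integral_sub (gmInt 4) ((gmInt 2).const_mul 3)]
    congr 1; funext x; ring
  rw [split, gm_two] at key
  linarith

/-! ### Normalized moments -/

noncomputable def mm (n : ℕ) : ℝ := (2*Real.pi) ^ (-(1:ℝ)/2) * gm n

lemma norm_fact : (2*Real.pi) ^ (-(1:ℝ)/2) * Real.sqrt (2 * Real.pi) = 1 := by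
  rw [Real.sqrt_eq_rpow, ← Real.rpow_add (by positivity)]
  norm_num

lemma mm_zero : mm 0 = 1 := by rw [mm, gm_zero, norm_fact]
lemma mm_one : mm 1 = 0 := by rw [mm, gm_odd 1 (by decide)]; ring
lemma mm_two : mm 2 = 1 := by rw [mm, gm_two, norm_fact]
lemma mm_three : mm 3 = 0 := by rw [mm, gm_odd 3 (by decide)]; ring
lemma mm_four : mm 4 = 3 := by
  rw [mm, gm_four, show (2*Real.pi) ^ (-(1:ℝ)/2) * (3 * Real.sqrt (2*Real.pi))
    = 3 * ((2*Real.pi) ^ (-(1:ℝ)/2) * Real.sqrt (2*Real.pi)) by ring, norm_fact]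
  norm_num

/-! ### Product structure of the Maxwellian -/

lemma maxw_nonneg (a v : E3) : 0 ≤ maxw a v := by
  unfold maxw; positivity

noncomputable def gauss1 (t : ℝ) : ℝ := (2*Real.pi) ^ (-(1:ℝ)/2) * Real.exp (-t^2/2)

lemma norm_sq_eq (x : E3) : ‖x‖^2 = ∑ c, (x c)^2 := by
  rw [EuclideanSpace.norm_eq, Real.sq_sqrt (by positivity)]
  simp [Real.norm_eq_abs, sq_abs]

lemma maxw_prod (a w : E3) : maxw a w = ∏ c, gauss1 (w c - a c) := by
  unfold maxw gauss1
  rw [Finset.prod_mul_distrib, Finset.prod_const]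
  congr 1
  · rw [← Real.rpow_natCast ((2*Real.pi) ^ (-(1:ℝ)/2)) _, ← Real.rpow_mul (by positivity)]
    norm_num
  · rw [← Real.exp_sum]
    congr 1
    rw [norm_sq_eq]
    simp only [PiLp.sub_apply]
    rw [← Finset.sum_neg_distrib, ← Finset.sum_div]

lemma integral_euclidean_prod (f : Fin 3 → ℝ → ℝ) :
    ∫ w : E3, ∏ c, f c (w c) = ∏ c, ∫ t, f c t := by
  have h := (EuclideanSpace.volume_preserving_symm_measurableEquiv_toLp (Fin 3)).integral_comp
    (MeasurableEquiv.toLp 2 (Fin 3 → ℝ)).symm.measurableEmbedding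
    (fun y : Fin 3 → ℝ => ∏ c, f c (y c))
  rw [MeasureTheory.volume_pi, MeasureTheory.integral_fintype_prod_eq_prod] at h
  exact h

lemma integral_zero_of_odd (a : E3) (F : E3 → ℝ) (h : ∀ w : E3, F (a + -w) = - F (a + w)) :
    ∫ w, F w = 0 := by
  have h1 : ∫ w : E3, F (a + w) = ∫ w, F w := integral_add_left_eq_self F a
  have h2 : ∫ w : E3, F (a + -w) = ∫ w : E3, F (a + w) :=
    integral_neg_eq_self (fun w : E3 => F (a + w)) volume
  simp_rw [h] at h2
  rw [integral_neg] at h2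
  linarith [h1, h2]

/-! ### Moment computations over `E3` -/

lemma I_eq (a : E3) (p : Fin 3 → ℕ) :
    ∫ w : E3, (∏ c, (w c - a c) ^ (p c)) * maxw a w = ∏ c, mm (p c) := by
  have h : ∀ w : E3, (∏ c, (w c - a c) ^ (p c)) * maxw a w
      = ∏ c, ((w c - a c) ^ (p c) * gauss1 (w c - a c)) := by
    intro w; rw [maxw_prod, Finset.prod_mul_distrib]
  simp_rw [h]
  rw [integral_euclidean_prod (fun c t => (t - a c) ^ (p c) * gauss1 (t - a c))]
  refine Finset.prod_congr rfl fun c _ => ?_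
  rw [integral_sub_right_eq_self (fun t : ℝ => t ^ (p c) * gauss1 t) (a c), mm, gm,
    ← MeasureTheory.integral_const_mul]
  congr 1; funext x; rw [gauss1]; ring

lemma delta_arith (i j k l : Fin 3) :
    mm ((if i = 0 then 1 else 0) + (if j = 0 then 1 else 0)
        + (if k = 0 then 1 else 0) + (if l = 0 then 1 else 0))
      * mm ((if i = 1 then 1 else 0) + (if j = 1 then 1 else 0)
        + (if k = 1 then 1 else 0) + (if l = 1 then 1 else 0))
      * mm ((if i = 2 then 1 else 0) + (if j = 2 then 1 else 0)
        + (if k = 2 then 1 else 0) + (if l = 2 then 1 else 0))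
      = ((if i = j then (1:ℝ) else 0) * (if k = l then 1 else 0)
          + (if i = k then 1 else 0) * (if j = l then 1 else 0)
          + (if j = k then 1 else 0) * (if i = l then 1 else 0)) := by
  fin_cases i <;> fin_cases j <;> fin_cases k <;> fin_cases l <;>
    norm_num [Fin.ext_iff, mm_zero, mm_one, mm_two, mm_three, mm_four]

lemma moment4 (a : E3) (i j k l : Fin 3) :
    ∫ w : E3, ((w i - a i) * (w j - a j) * (w k - a k) * (w l - a l)) * maxw a w
      = ((if i = j then (1:ℝ) else 0) * (if k = l then 1 else 0)
          + (if i = k then 1 else 0) * (if j = l then 1 else 0)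
          + (if j = k then 1 else 0) * (if i = l then 1 else 0)) := by
  set p : Fin 3 → ℕ := fun c => (if i = c then 1 else 0) + (if j = c then 1 else 0)
      + (if k = c then 1 else 0) + (if l = c then 1 else 0) with hp
  have hw : ∀ w : E3, (w i - a i) * (w j - a j) * (w k - a k) * (w l - a l)
      = ∏ c, (w c - a c) ^ (p c) := by
    intro w
    simp only [hp, pow_add, Finset.prod_mul_distrib, pow_ite, pow_one, pow_zero,
      Finset.prod_ite_eq, Finset.mem_univ, if_true]
  simp_rw [hw]
  rw [I_eq, Fin.prod_univ_three]
  exact delta_arith i j k l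

/-! ### Vanishing odd integrals -/

lemma coord_add (a x : E3) (c : Fin 3) : (a + x) c - a c = x c := by
  simp [PiLp.add_apply]

lemma maxw_flip (a w : E3) : maxw a (a + -w) = maxw a (a + w) := by
  unfold maxw
  rw [add_sub_cancel_left, add_sub_cancel_left, norm_neg]

lemma norm_flip (a w : E3) : ‖(a + -w) - a‖ = ‖(a + w) - a‖ := by
  rw [add_sub_cancel_left, add_sub_cancel_left, norm_neg]

lemma int0 (a : E3) (i j k : Fin 3) :
    ∫ w : E3, ((w i - a i) * (w j - a j) * (w k - a k) * Real.sqrt (maxw a w)) * 1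
      * Real.sqrt (maxw a w) = 0 := by
  apply integral_zero_of_odd a
  intro w
  simp only [coord_add, maxw_flip, PiLp.neg_apply]
  ring

lemma int4 (a : E3) (i j k : Fin 3) :
    ∫ w : E3, ((w i - a i) * (w j - a j) * (w k - a k) * Real.sqrt (maxw a w))
      * ((‖w - a‖ ^ 2 - 3) / Real.sqrt 6) * Real.sqrt (maxw a w) = 0 := by
  apply integral_zero_of_odd a
  intro w
  simp only [coord_add, maxw_flip, norm_flip, PiLp.neg_apply]
  ring

/-! ### Main theorem -/

/-- `P_a(φ_i φ_j φ_k √μ_a)(v)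
 = Σ_ℓ (δ_{ij}δ_{kℓ} + δ_{ik}δ_{jℓ} + δ_{jk}δ_{iℓ}) φ_ℓ(v) √μ_a(v)` for `i,j,k ∈ {1,2,3}`. -/
theorem stmt16 (a : E3) (i j k : Fin 3) (v : E3) :
    Pproj a (fun w => (w i - a i) * (w j - a j) * (w k - a k) * Real.sqrt (maxw a w)) v
      = ∑ ℓ : Fin 3,
          ((if i = j then (1:ℝ) else 0) * (if k = ℓ then 1 else 0)
            + (if i = k then 1 else 0) * (if j = ℓ then 1 else 0)
            + (if j = k then 1 else 0) * (if i = ℓ then 1 else 0))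
          * ((v ℓ - a ℓ) * Real.sqrt (maxw a v)) := by
  have conv : ∀ l : Fin 3,
      (∫ w : E3, ((w i - a i) * (w j - a j) * (w k - a k) * Real.sqrt (maxw a w))
          * (w l - a l) * Real.sqrt (maxw a w))
        = ((if i = j then (1:ℝ) else 0) * (if k = l then 1 else 0)
            + (if i = k then 1 else 0) * (if j = l then 1 else 0)
            + (if j = k then 1 else 0) * (if i = l then 1 else 0)) := by
    intro l
    rw [← moment4 a i j k l]
    congr 1; funext w
    linear_combination ((w i - a i) * (w j - a j) * (w k - a k) * (w l - a l))
      * Real.mul_self_sqrt (maxw_nonneg a w)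
  unfold Pproj
  rw [Fin.sum_univ_five, Fin.sum_univ_three]
  simp only [phiB, Matrix.cons_val_zero, Matrix.cons_val_one, Matrix.head_cons,
    Matrix.cons_val_two, Matrix.tail_cons, Matrix.cons_val_three, Matrix.cons_val_four,
    Matrix.head_fin_const]
  rw [int0, int4, conv 0, conv 1, conv 2]
  ring
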